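/- Let β ∈ [0,1] and consider a market with finite player set N and item set M where each valuation v_i : 2^M → ℝ≥0 is monotone and β-SI. Let p : M → ℝ≥0 be a price vector and let (A_i)_{i∈N} be a full allocation of M such that each A_i is in local demand for player i given p. Then Σ_i v_i(A_i) ≥ OPT/(2−β), where OPT is the maximum of Σ_i v_i(O_i) over all allocations (O_i). -/

import Mathlib

/-- The price of a bundle: `p(S) = Σ_{j∈S} p j`. -/
def bundlePrice {M : Type*} [DecidableEq M] (p : M → ℝ) (S : Finset M) : ℝ :=
  ∑ j ∈ S, p j

/-- A bundle `S` is in local demand for `v` given prices `p` if its utility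
cannot be strictly increased by adding one item, removing one item, or swapping
one item of `S` for one item outside `S`. -/
def InLocalDemand {M : Type*} [Fintype M] [DecidableEq M]
    (v : Finset M → ℝ) (p : M → ℝ) (S : Finset M) : Prop :=
  (∀ j : M, j ∉ S →
    v S - bundlePrice p S ≥ v (insert j S) - bundlePrice p (insert j S)) ∧
  (∀ j ∈ S,
    v S - bundlePrice p S ≥ v (S.erase j) - bundlePrice p (S.erase j)) ∧
  (∀ j ∈ S, ∀ j' : M, j' ∉ S →
    v S - bundlePrice p S ≥
      v (insert j' (S.erase j)) - bundlePrice p (insert j' (S.erase j)))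

/-- A valuation is `β`-SI if every bundle in local demand is strongly
individually rational and `β`-approximately in (global) demand. -/
def BetaSI {M : Type*} [Fintype M] [DecidableEq M]
    (β : ℝ) (v : Finset M → ℝ) : Prop :=
  ∀ p : M → ℝ, (∀ j : M, 0 ≤ p j) → ∀ S : Finset M, InLocalDemand v p S →
    (∀ T : Finset M, T ⊆ S → v T ≥ bundlePrice p T) ∧
    (∀ T : Finset M, v S - β * bundlePrice p S ≥ v T - bundlePrice p T)

/-- Observation: welfare of local-demand allocations under
`β`-SI valuations.  Each `v_i` is monotone and `β`-SI (`β ∈ [0,1]`).  If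
`(A_i)` is a full allocation such that each `A_i` is in local demand for player
`i` given the nonnegative prices `p`, then `Σ_i v_i(A_i) ≥ OPT/(2−β)`, i.e. the
welfare of `(A_i)` is within a factor `2−β` of the welfare of every
allocation. -/
theorem beta_SI_local_demand_welfare
    {N M : Type*} [Fintype N] [Fintype M] [DecidableEq M]
    (β : ℝ) (hβ0 : 0 ≤ β) (hβ1 : β ≤ 1)
    (v : N → Finset M → ℝ)
    (hv : ∀ (i : N) (S : Finset M), 0 ≤ v i S)
    (hmono : ∀ (i : N) (S T : Finset M), S ⊆ T → v i S ≤ v i T)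
    (hSI : ∀ i : N, BetaSI β (v i))
    (p : M → ℝ) (hp : ∀ j : M, 0 ≤ p j)
    (A : N → Finset M)
    (hdisj : ∀ i i' : N, i ≠ i' → Disjoint (A i) (A i'))
    (hfull : ∀ j : M, ∃ i : N, j ∈ A i)
    (hlocal : ∀ i : N, InLocalDemand (v i) p (A i)) :
    ∀ O : N → Finset M, (∀ i i' : N, i ≠ i' → Disjoint (O i) (O i')) →
      ∑ i : N, v i (A i) ≥ (∑ i : N, v i (O i)) / (2 - β) := by
  classical
  intro O hO
  have h2 : (0:ℝ) < 2 - β := by linarith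
  have hIR : ∀ i, bundlePrice p (A i) ≤ v i (A i) := fun i =>
    ((hSI i p hp (A i) (hlocal i)).1 (A i) (subset_refl _))
  have hD : ∀ i, v i (O i) - bundlePrice p (O i) ≤ v i (A i) - β * bundlePrice p (A i) :=
    fun i => (hSI i p hp (A i) (hlocal i)).2 (O i)
  have hpartA : ∑ i, bundlePrice p (A i) = ∑ j, p j := by
    unfold bundlePrice
    rw [← Finset.sum_biUnion (f := p) (fun i _ i' _ hne => hdisj i i' hne)]
    congr 1
    apply Finset.eq_univ_iff_forall.mpr
    intro j
    obtain ⟨i, hi⟩ := hfull j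
    exact Finset.mem_biUnion.mpr ⟨i, Finset.mem_univ i, hi⟩
  have hpartO : ∑ i, bundlePrice p (O i) ≤ ∑ j, p j := by
    unfold bundlePrice
    rw [← Finset.sum_biUnion (f := p) (fun i _ i' _ hne => hO i i' hne)]
    exact Finset.sum_le_sum_of_subset_of_nonneg (Finset.subset_univ _)
      (fun j _ _ => hp j)
  have hsumIR : ∑ i, bundlePrice p (A i) ≤ ∑ i, v i (A i) :=
    Finset.sum_le_sum fun i _ => hIR i
  have hsumD : ∑ i, (v i (O i) - bundlePrice p (O i)) ≤
      ∑ i, (v i (A i) - β * bundlePrice p (A i)) :=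
    Finset.sum_le_sum fun i _ => hD i
  rw [Finset.sum_sub_distrib] at hsumD
  rw [Finset.sum_sub_distrib, ← Finset.mul_sum] at hsumD
  have hpM : ∑ j, p j ≤ ∑ i, v i (A i) := hpartA ▸ hsumIR
  have hmul : (1 - β) * (∑ j, p j) ≤ (1 - β) * (∑ i, v i (A i)) :=
    mul_le_mul_of_nonneg_left hpM (by linarith)
  rw [ge_iff_le, div_le_iff₀ h2]
  nlinarith [hsumD, hpartA, hpartO, hmul]
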